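/- Let C ∈ ℝ, let D ∈ ℂ with D ≠ 0, let β′ < β < 1 with β > 0, let M ≥ 0, R > 0, b ∈ ℝ, and let r : (R, ∞) × ℝ → ℂ satisfy |r(ρ, θ)| ≤ M ρ^{β′} for all ρ > R and θ ∈ ℝ. Then it is impossible that for all ρ > R and all θ ∈ ℝ: Im(C ρ e^{iθ} + D ρ^β e^{iβθ}) + Im r(ρ, θ) ≤ ρ |sin θ| + b. Consequently, if a dispersion relation ω = C k + D k^β + O(|k|^{β′}) with real leading coefficient C satisfies the improved causality criterion Im ω ≤ |Im k| + b for large complex k, then its next-to-leading exponent obeys β ≤ 0. -/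

import Mathlib

open Filter Real

/-- A dispersion relation `ω = C k + D k^β + O(|k|^{β'})` with real
leading coefficient `C` and next-to-leading exponent `β ∈ (0,1)`, `D ≠ 0`, cannot satisfy
the improved causality criterion `Im ω ≤ |Im k| + b` for all large complex `k = ρ e^{iθ}`:
consequently the next-to-leading exponent of such a causal dispersion relation obeys
`β ≤ 0`. -/
theorem causal_next_to_leading_exponent_nonpositive (C : ℝ) (D : ℂ) (hD : D ≠ 0)
    (β β' : ℝ) (hβ' : β' < β) (hβ1 : β < 1) (hβ0 : 0 < β)
    (M R : ℝ) (hM : 0 ≤ M) (hR : 0 < R) (b : ℝ)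
    (r : ℝ → ℝ → ℂ)
    (hr : ∀ ρ θ : ℝ, R < ρ → ‖r ρ θ‖ ≤ M * ρ ^ β') :
    ¬ (∀ ρ θ : ℝ, R < ρ →
        ((C : ℂ) * ρ * Complex.exp (Complex.I * θ) +
            D * ((ρ ^ β : ℝ) : ℂ) * Complex.exp (Complex.I * β * θ)).im + (r ρ θ).im ≤
          ρ * |Real.sin θ| + b) := by
  intro h
  have hπ := Real.pi_pos
  set t := Complex.arg D with ht
  set s := β * Real.pi with hs
  have hs0 : 0 < s := by positivity
  have hsπ : s < Real.pi := by
    rw [hs]; nlinarith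
  -- choose integer N with sin (t + N * s) > 0
  set N : ℤ := ⌊(2 * Real.pi - t) / s⌋ + 1 with hN
  set x : ℝ := t + N * s with hx
  have hx1 : 2 * Real.pi < x := by
    have h1 : (2 * Real.pi - t) / s < (N : ℝ) := by
      rw [hN]; push_cast; exact Int.lt_floor_add_one _
    have h2 : 2 * Real.pi - t < (N : ℝ) * s := (div_lt_iff₀ hs0).mp h1
    rw [hx]; linarith
  have hx2 : x < 3 * Real.pi := by
    have h1 : ((N : ℝ) - 1) ≤ (2 * Real.pi - t) / s := by
      rw [hN]; push_cast; simpa using Int.floor_le ((2 * Real.pi - t) / s)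
    have h2 : ((N : ℝ) - 1) * s ≤ 2 * Real.pi - t := by
      have := mul_le_mul_of_nonneg_right h1 hs0.le
      rwa [div_mul_cancel₀ _ hs0.ne'] at this
    rw [hx]; nlinarith
  have hsinx : 0 < Real.sin x := by
    have h0 : Real.sin (x - 2 * Real.pi) = Real.sin x := Real.sin_sub_two_pi x
    rw [← h0]
    apply Real.sin_pos_of_pos_of_lt_pi <;> linarith
  set A : ℝ := ‖D‖ * Real.sin x with hA
  have hA0 : 0 < A := mul_pos (norm_pos_iff.mpr hD) hsinx
  -- key bound for all ρ > R
  have key : ∀ ρ : ℝ, R < ρ → A * ρ ^ β ≤ b + M * ρ ^ β' := by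
    intro ρ hρ
    set θ : ℝ := (N : ℝ) * Real.pi with hθ
    have hsinθ : Real.sin θ = 0 := Real.sin_int_mul_pi N
    have h1 : (Complex.I * (θ : ℂ)) = ((θ : ℝ) : ℂ) * Complex.I := by ring
    have h2 : (Complex.I * (β : ℂ) * (θ : ℂ)) = (((β * θ : ℝ)) : ℂ) * Complex.I := by
      push_cast; ring
    have e1 : ((C : ℂ) * ρ * Complex.exp (Complex.I * θ)).im = 0 := by
      rw [h1]
      simp [Complex.exp_mul_I, Complex.mul_im, Complex.mul_re,
        Complex.sin_ofReal_re, Complex.cos_ofReal_re, hsinθ]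
    have hD' : D = (‖D‖ : ℂ) * Complex.exp ((t : ℂ) * Complex.I) :=
      (Complex.norm_mul_exp_arg_mul_I D).symm
    have e2 : (D * ((ρ ^ β : ℝ) : ℂ) * Complex.exp (Complex.I * β * θ)).im
        = ρ ^ β * A := by
      rw [h2, hD']
      have : ((‖D‖ : ℂ) * Complex.exp ((t : ℂ) * Complex.I) * ((ρ ^ β : ℝ) : ℂ) *
          Complex.exp (((β * θ : ℝ) : ℂ) * Complex.I))
          = ((‖D‖ : ℂ) * ((ρ ^ β : ℝ) : ℂ)) *
            Complex.exp ((((t + β * θ : ℝ)) : ℂ) * Complex.I) := by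
        rw [Complex.ofReal_add, add_mul, Complex.exp_add]; ring
      rw [this]
      have hxeq : t + β * θ = x := by
        rw [hx, hθ, hs]; ring
      rw [hxeq]
      simp [Complex.exp_mul_I, Complex.mul_im, Complex.mul_re,
        Complex.sin_ofReal_re, Complex.cos_ofReal_re, hA]
      ring
    have := h ρ θ hρ
    rw [Complex.add_im, e1, e2, hsinθ] at this
    simp only [abs_zero, mul_zero, zero_add] at this
    have him : -(M * ρ ^ β') ≤ (r ρ θ).im := by
      have h3 : |(r ρ θ).im| ≤ ‖r ρ θ‖ := Complex.abs_im_le_norm _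
      have h4 := hr ρ θ hρ
      have := neg_abs_le (r ρ θ).im
      linarith
    nlinarith
  -- contradiction: A * ρ^β - M * ρ^β' → ∞
  have hT : Tendsto (fun ρ : ℝ => A * ρ ^ β - M * ρ ^ β') atTop atTop := by
    have h0 : Tendsto (fun ρ : ℝ => ρ ^ β * (A - M * ρ ^ (β' - β))) atTop atTop := by
      have hg : Tendsto (fun ρ : ℝ => A - M * ρ ^ (β' - β)) atTop (nhds A) := by
        have h1 : Tendsto (fun ρ : ℝ => ρ ^ (β' - β)) atTop (nhds 0) := by
          have := tendsto_rpow_neg_atTop (y := β - β') (by linarith)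
          simpa [neg_sub] using this
        have : Tendsto (fun ρ : ℝ => A - M * ρ ^ (β' - β)) atTop (nhds (A - M * 0)) :=
          (tendsto_const_nhds.sub ((tendsto_const_nhds.mul h1)))
        simpa using this
      exact (tendsto_rpow_atTop hβ0).atTop_mul_pos hA0 hg
    apply h0.congr'
    filter_upwards [eventually_gt_atTop 0] with ρ hρ
    rw [mul_sub, show ρ ^ β * (M * ρ ^ (β' - β)) = M * (ρ ^ β * ρ ^ (β' - β)) by ring,
      ← Real.rpow_add hρ, show β + (β' - β) = β' by ring]
    ring
  have := (hT.eventually_gt_atTop b).and (eventually_gt_atTop R)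
  obtain ⟨ρ, h1, h2⟩ := this.exists
  have := key ρ h2
  linarith
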